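/- Let f : (0,∞) → ℝ with f(1) = 0 be convex and twice continuously differentiable, and suppose there is a constant L ≥ 0 such that for all x, y ∈ (0,1): L ≤ (1/y)·f''(x/y) + (1/(1−y))·f''((1−x)/(1−y)). Then for all nonnegative vectors 𝐩, 𝐪 ∈ ℝⁿ with ‖𝐩‖₁ = ‖𝐪‖₁ = c > 0 and n = 2, the f-divergence satisfies D_f(𝐩‖𝐪) ≥ (L/(2c))·TV(𝐩,𝐪)². -/

import Mathlib

open Set Filter




/-- `f'(∞) := lim_{x↓0} x f(1/x)`, taken in `EReal` (via `limsup`, which agrees with the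
limit whenever the latter exists, including the value `+∞`). -/
noncomputable def fDerivInfE (f : ℝ → ℝ) : EReal :=
  Filter.limsup (fun x : ℝ => ((x * f (1 / x) : ℝ) : EReal)) (nhdsWithin 0 (Set.Ioi 0))

/-- The `f`-divergence `D_f(𝐩‖𝐪) = Σᵢ qᵢ f(pᵢ/qᵢ)` with the standard conventions
`0 f(0/0) = 0` and `0 f(a/0) = a f'(∞)` for `a > 0`, valued in `EReal`. -/
noncomputable def fDivE (f : ℝ → ℝ) {n : ℕ} (p q : Fin n → ℝ) : EReal :=
  ∑ i, if q i = 0 then (p i : EReal) * fDerivInfE f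
    else ((q i * f (p i / q i) : ℝ) : EReal)

/-- Let `f : (0,∞) → ℝ` with `f(1) = 0` be convex and twice continuously
differentiable (the value `f(0) := f(0⁺)` encodes the standard convention), and suppose
`L ≥ 0` satisfies `L ≤ (1/y) f''(x/y) + (1/(1−y)) f''((1−x)/(1−y))` for all `x, y ∈ (0,1)`.
Then for all nonnegative two-dimensional vectors `𝐩, 𝐪` with `‖𝐩‖₁ = ‖𝐪‖₁ = c > 0`,
`D_f(𝐩‖𝐪) ≥ (L/(2c)) TV(𝐩,𝐪)²`. -/

private lemma keyR (f : ℝ → ℝ) (hsmooth : ContDiffOn ℝ 2 f (Set.Ioi 0))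
    (hf1 : f 1 = 0) (hf0 : Filter.Tendsto f (nhdsWithin 0 (Set.Ioi 0)) (nhds (f 0)))
    (L : ℝ)
    (hL : ∀ x y : ℝ, 0 < x → x < 1 → 0 < y → y < 1 →
      L ≤ (1 / y) * deriv (deriv f) (x / y)
          + (1 / (1 - y)) * deriv (deriv f) ((1 - x) / (1 - y)))
    (a b p0 : ℝ) (ha : 0 < a) (hb : 0 < b) (hp0 : 0 ≤ p0) (hp0c : p0 ≤ a + b) :
    L / (2 * (a + b)) * (p0 - a) ^ 2 ≤ a * f (p0 / a) + b * f ((a + b - p0) / b) := by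
  set c := a + b with hcdef
  have hc : 0 < c := by positivity
  set F1 := deriv f with hF1def
  set F2 := deriv F1 with hF2def
  have hfd : DifferentiableOn ℝ f (Set.Ioi 0) := hsmooth.differentiableOn (by norm_num)
  have hf' : ∀ x : ℝ, 0 < x → HasDerivAt f (F1 x) x := by
    intro x hx
    exact (hfd.differentiableAt (isOpen_Ioi.mem_nhds hx)).hasDerivAt
  have hF1smooth : ContDiffOn ℝ 1 F1 (Set.Ioi 0) :=
    hsmooth.deriv_of_isOpen isOpen_Ioi (by norm_num)
  have hF1' : ∀ x : ℝ, 0 < x → HasDerivAt F1 (F2 x) x := by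
    intro x hx
    exact (((hF1smooth.differentiableOn (by norm_num)).differentiableAt
      (isOpen_Ioi.mem_nhds hx))).hasDerivAt
  set g : ℝ → ℝ := fun t => a * f (t / a) + b * f ((c - t) / b) with hgdef
  set g1 : ℝ → ℝ := fun t => F1 (t / a) - F1 ((c - t) / b) with hg1def
  have hg' : ∀ t ∈ Set.Ioo (0:ℝ) c, HasDerivAt g (g1 t) t := by
    intro t ht
    have h1 : (0:ℝ) < t / a := div_pos ht.1 ha
    have h2 : (0:ℝ) < (c - t) / b := div_pos (by linarith [ht.2]) hb
    have d1 : HasDerivAt (fun t : ℝ => t / a) (1 / a) t := by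
      simpa using (hasDerivAt_id t).div_const a
    have d2 : HasDerivAt (fun t : ℝ => (c - t) / b) (-1 / b) t := by
      have := ((hasDerivAt_const t c).sub (hasDerivAt_id t)).div_const b
      simpa using this
    have e1 := ((hf' _ h1).comp t d1).const_mul a
    have e2 := ((hf' _ h2).comp t d2).const_mul b
    have := e1.add e2
    convert this using 1
    · rfl
    · rfl
    · rfl
    simp only [hg1def]
    field_simp
    ring
  have hg1' : ∀ t ∈ Set.Ioo (0:ℝ) c,
      HasDerivAt g1 (1 / a * F2 (t / a) + 1 / b * F2 ((c - t) / b)) t := by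
    intro t ht
    have h1 : (0:ℝ) < t / a := div_pos ht.1 ha
    have h2 : (0:ℝ) < (c - t) / b := div_pos (by linarith [ht.2]) hb
    have d1 : HasDerivAt (fun t : ℝ => t / a) (1 / a) t := by
      simpa using (hasDerivAt_id t).div_const a
    have d2 : HasDerivAt (fun t : ℝ => (c - t) / b) (-1 / b) t := by
      have := ((hasDerivAt_const t c).sub (hasDerivAt_id t)).div_const b
      simpa using this
    have e1 := (hF1' _ h1).comp t d1
    have e2 := (hF1' _ h2).comp t d2
    have := e1.sub e2
    convert this using 1
    · rfl
    · rfl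
    · rfl
    ring
  have hbound : ∀ t ∈ Set.Ioo (0:ℝ) c, L / c ≤ 1 / a * F2 (t / a) + 1 / b * F2 ((c - t) / b) := by
    intro t ht
    have hx1 : (0:ℝ) < t / c := div_pos ht.1 hc
    have hx2 : t / c < 1 := (div_lt_one hc).2 ht.2
    have hy1 : (0:ℝ) < a / c := div_pos ha hc
    have hy2 : a / c < 1 := (div_lt_one hc).2 (by linarith)
    have := hL (t / c) (a / c) hx1 hx2 hy1 hy2
    have e1 : (t / c) / (a / c) = t / a := by
      field_simp
    have e2 : (1 - t / c) / (1 - a / c) = (c - t) / b := by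
      rw [one_sub_div (ne_of_gt hc), one_sub_div (ne_of_gt hc)]
      have : c - a = b := by rw [hcdef]; ring
      rw [this]
      field_simp
    have e3 : 1 / (a / c) = c / a := by field_simp
    have e4 : 1 / (1 - a / c) = c / b := by
      rw [one_sub_div (ne_of_gt hc)]
      have : c - a = b := by rw [hcdef]; ring
      rw [this]
      field_simp
    rw [e1, e2, e3, e4] at this
    rw [div_le_iff₀ hc] at *
    calc L ≤ c / a * F2 (t / a) + c / b * F2 ((c - t) / b) := this
    _ = (1 / a * F2 (t / a) + 1 / b * F2 ((c - t) / b)) * c := by field_simp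
  -- H and H1
  set H : ℝ → ℝ := fun t => g t - L / (2 * c) * (t - a) ^ 2 with hHdef
  set H1 : ℝ → ℝ := fun t => g1 t - L / c * (t - a) with hH1def
  have hH' : ∀ t ∈ Set.Ioo (0:ℝ) c, HasDerivAt H (H1 t) t := by
    intro t ht
    have dq : HasDerivAt (fun t : ℝ => L / (2 * c) * (t - a) ^ 2)
        (L / (2 * c) * (2 * (t - a))) t := by
      have : HasDerivAt (fun t : ℝ => (t - a) ^ 2) (2 * (t - a) ^ 1 * 1) t :=
        ((hasDerivAt_id t).sub_const a).pow 2
      simpa using this.const_mul (L / (2 * c))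
    have := (hg' t ht).sub dq
    convert this using 1
    · rfl
    · rfl
    · rfl
    simp only [hH1def]
    field_simp
  have hH1' : ∀ t ∈ Set.Ioo (0:ℝ) c,
      HasDerivAt H1 (1 / a * F2 (t / a) + 1 / b * F2 ((c - t) / b) - L / c) t := by
    intro t ht
    have dq : HasDerivAt (fun t : ℝ => L / c * (t - a)) (L / c * 1) t := by
      simpa using ((hasDerivAt_id t).sub_const a).const_mul (L / c)
    have := (hg1' t ht).sub dq
    rw [mul_one] at this
    exact this
  have hamem : a ∈ Set.Ioo (0:ℝ) c := ⟨ha, by rw [hcdef]; linarith⟩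
  have hH1a : H1 a = 0 := by
    simp only [hH1def, hg1def]
    have : c - a = b := by rw [hcdef]; ring
    rw [div_self (ne_of_gt ha), this, div_self (ne_of_gt hb)]
    ring
  have hH1mono : MonotoneOn H1 (Set.Ioo (0:ℝ) c) := by
    apply monotoneOn_of_deriv_nonneg (convex_Ioo 0 c)
    · exact fun t ht => (hH1' t ht).continuousAt.continuousWithinAt
    · rw [interior_Ioo]
      exact fun t ht => (hH1' t ht).differentiableAt.differentiableWithinAt
    · rw [interior_Ioo]
      intro t ht
      rw [(hH1' t ht).deriv]
      linarith [hbound t ht]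
  have hHa : H a = 0 := by
    simp only [hHdef, hgdef]
    have : c - a = b := by rw [hcdef]; ring
    rw [div_self (ne_of_gt ha), this, div_self (ne_of_gt hb), hf1]
    ring
  have hmain : ∀ t ∈ Set.Ioo (0:ℝ) c, L / (2 * c) * (t - a) ^ 2 ≤ g t := by
    intro t ht
    have key : H a ≤ H t := by
      rcases le_total a t with hat | hat
      · have hmono : MonotoneOn H (Set.Icc a t) := by
          apply monotoneOn_of_deriv_nonneg (convex_Icc a t)
          · intro s hs
            have hs' : s ∈ Set.Ioo (0:ℝ) c := ⟨lt_of_lt_of_le ha hs.1, lt_of_le_of_lt hs.2 ht.2⟩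
            exact (hH' s hs').continuousAt.continuousWithinAt
          · rw [interior_Icc]
            intro s hs
            have hs' : s ∈ Set.Ioo (0:ℝ) c := ⟨lt_trans ha hs.1, lt_trans hs.2 ht.2⟩
            exact (hH' s hs').differentiableAt.differentiableWithinAt
          · rw [interior_Icc]
            intro s hs
            have hs' : s ∈ Set.Ioo (0:ℝ) c := ⟨lt_trans ha hs.1, lt_trans hs.2 ht.2⟩
            rw [(hH' s hs').deriv]
            have := hH1mono hamem hs' (le_of_lt hs.1)
            linarith [hH1a ▸ this]
        exact hmono (Set.left_mem_Icc.2 hat) (Set.right_mem_Icc.2 hat) hat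
      · have hmono : AntitoneOn H (Set.Icc t a) := by
          apply antitoneOn_of_deriv_nonpos (convex_Icc t a)
          · intro s hs
            have hs' : s ∈ Set.Ioo (0:ℝ) c := ⟨lt_of_lt_of_le ht.1 hs.1, lt_of_le_of_lt hs.2 hamem.2⟩
            exact (hH' s hs').continuousAt.continuousWithinAt
          · rw [interior_Icc]
            intro s hs
            have hs' : s ∈ Set.Ioo (0:ℝ) c := ⟨lt_trans ht.1 hs.1, lt_trans hs.2 hamem.2⟩
            exact (hH' s hs').differentiableAt.differentiableWithinAt
          · rw [interior_Icc]
            intro s hs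
            have hs' : s ∈ Set.Ioo (0:ℝ) c := ⟨lt_trans ht.1 hs.1, lt_trans hs.2 hamem.2⟩
            rw [(hH' s hs').deriv]
            have := hH1mono hs' hamem (le_of_lt hs.2)
            linarith [hH1a ▸ this]
        exact hmono (Set.left_mem_Icc.2 hat) (Set.right_mem_Icc.2 hat) hat
    rw [hHa] at key
    simp only [hHdef] at key
    linarith
  -- endpoints
  rcases eq_or_lt_of_le hp0 with h0 | h0
  · -- p0 = 0
    subst h0
    have hmap : Tendsto (fun t : ℝ => t / a) (nhdsWithin 0 (Set.Ioi 0)) (nhdsWithin 0 (Set.Ioi 0)) := by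
      apply tendsto_nhdsWithin_of_tendsto_nhds_of_eventually_within
      · have : Tendsto (fun t : ℝ => t / a) (nhds 0) (nhds (0 / a)) :=
          (tendsto_id.div_const a)
        rw [zero_div] at this
        exact this.mono_left nhdsWithin_le_nhds
      · exact eventually_mem_nhdsWithin.mono (fun t ht => div_pos ht ha)
    have t1 : Tendsto (fun t : ℝ => a * f (t / a)) (nhdsWithin 0 (Set.Ioi 0))
        (nhds (a * f 0)) := (hf0.comp hmap).const_mul a
    have hcb : (0:ℝ) < c / b := div_pos hc hb
    have t2 : Tendsto (fun t : ℝ => b * f ((c - t) / b)) (nhdsWithin 0 (Set.Ioi 0))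
        (nhds (b * f (c / b))) := by
      have hfC : Tendsto f (nhds (c / b)) (nhds (f (c / b))) := (hf' _ hcb).continuousAt
      have hinner : Tendsto (fun t : ℝ => (c - t) / b) (nhds 0) (nhds (c / b)) := by
        have h2 : ContinuousAt (fun t : ℝ => (c - t) / b) 0 := by fun_prop
        simpa using h2.tendsto
      have hcomp := (hfC.comp hinner).mono_left (nhdsWithin_le_nhds (s := Set.Ioi (0:ℝ)))
      have := hcomp.const_mul b
      simpa [Function.comp] using this
    have hGt : Tendsto g (nhdsWithin 0 (Set.Ioi 0)) (nhds (a * f 0 + b * f (c / b))) :=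
      t1.add t2
    have hQ : Tendsto (fun t : ℝ => L / (2 * c) * (t - a) ^ 2) (nhdsWithin 0 (Set.Ioi 0))
        (nhds (L / (2 * c) * ((0:ℝ) - a) ^ 2)) := by
      have : ContinuousAt (fun t : ℝ => L / (2 * c) * (t - a) ^ 2) 0 := by fun_prop
      exact this.tendsto.mono_left nhdsWithin_le_nhds
    have ev : ∀ᶠ t in nhdsWithin (0:ℝ) (Set.Ioi 0),
        L / (2 * c) * (t - a) ^ 2 ≤ g t := by
      filter_upwards [Ioo_mem_nhdsGT_of_mem (Set.left_mem_Ico.2 hc)] with t ht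
      exact hmain t ht
    have := le_of_tendsto_of_tendsto hQ hGt ev
    simpa [hgdef] using this
  rcases eq_or_lt_of_le hp0c with hcc | hcc
  · -- p0 = c
    subst hcc
    have hmap : Tendsto (fun t : ℝ => (c - t) / b) (nhdsWithin c (Set.Iio c))
        (nhdsWithin 0 (Set.Ioi 0)) := by
      apply tendsto_nhdsWithin_of_tendsto_nhds_of_eventually_within
      · have : ContinuousAt (fun t : ℝ => (c - t) / b) c := by fun_prop
        have h2 := this.tendsto.mono_left (nhdsWithin_le_nhds (s := Set.Iio c))
        simpa using h2
      · exact eventually_mem_nhdsWithin.mono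
          (fun t ht => div_pos (by simpa using sub_pos.2 (Set.mem_Iio.1 ht)) hb)
    have t2 : Tendsto (fun t : ℝ => b * f ((c - t) / b)) (nhdsWithin c (Set.Iio c))
        (nhds (b * f 0)) := (hf0.comp hmap).const_mul b
    have hca : (0:ℝ) < c / a := div_pos hc ha
    have t1 : Tendsto (fun t : ℝ => a * f (t / a)) (nhdsWithin c (Set.Iio c))
        (nhds (a * f (c / a))) := by
      have hfC : Tendsto f (nhds (c / a)) (nhds (f (c / a))) := (hf' _ hca).continuousAt
      have hinner : Tendsto (fun t : ℝ => t / a) (nhds c) (nhds (c / a)) := by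
        have h2 : ContinuousAt (fun t : ℝ => t / a) c := by fun_prop
        exact h2.tendsto
      have hcomp := (hfC.comp hinner).mono_left (nhdsWithin_le_nhds (s := Set.Iio c))
      have := hcomp.const_mul a
      simpa [Function.comp] using this
    have hGt : Tendsto g (nhdsWithin c (Set.Iio c)) (nhds (a * f (c / a) + b * f 0)) :=
      t1.add t2
    have hQ : Tendsto (fun t : ℝ => L / (2 * c) * (t - a) ^ 2) (nhdsWithin c (Set.Iio c))
        (nhds (L / (2 * c) * (c - a) ^ 2)) := by
      have : ContinuousAt (fun t : ℝ => L / (2 * c) * (t - a) ^ 2) c := by fun_prop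
      exact this.tendsto.mono_left nhdsWithin_le_nhds
    have ev : ∀ᶠ t in nhdsWithin c (Set.Iio c),
        L / (2 * c) * (t - a) ^ 2 ≤ g t := by
      filter_upwards [Ioo_mem_nhdsLT_of_mem (Set.right_mem_Ioc.2 hc)] with t ht
      exact hmain t ht
    have := le_of_tendsto_of_tendsto hQ hGt ev
    simpa [hgdef] using this
  · have := hmain p0 ⟨h0, hcc⟩
    simpa [hgdef] using this

private lemma keyE (f : ℝ → ℝ) (hsmooth : ContDiffOn ℝ 2 f (Set.Ioi 0))
    (hf1 : f 1 = 0) (hf0 : Filter.Tendsto f (nhdsWithin 0 (Set.Ioi 0)) (nhds (f 0)))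
    (L : ℝ)
    (hL : ∀ x y : ℝ, 0 < x → x < 1 → 0 < y → y < 1 →
      L ≤ (1 / y) * deriv (deriv f) (x / y)
          + (1 / (1 - y)) * deriv (deriv f) ((1 - x) / (1 - y)))
    (c p0 : ℝ) (hc : 0 < c) (hp0 : 0 < p0) (hp0c : p0 ≤ c) :
    ((L / (2 * c) * p0 ^ 2 : ℝ) : EReal) ≤
      (p0 : EReal) * fDerivInfE f + ((c * f ((c - p0) / c) : ℝ) : EReal) := by
  have hfd : DifferentiableOn ℝ f (Set.Ioi 0) := hsmooth.differentiableOn (by norm_num)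
  have hf' : ∀ x : ℝ, 0 < x → ContinuousAt f x := by
    intro x hx
    exact (hfd.differentiableAt (isOpen_Ioi.mem_nhds hx)).continuousAt
  set r0 : ℝ := (L / (2 * c) * p0 ^ 2 - c * f ((c - p0) / c)) / p0 with hr0def
  set w : ℝ → ℝ := fun x =>
    (L / (2 * c) * (p0 - p0 * x) ^ 2 - (c - p0 * x) * f ((c - p0) / (c - p0 * x))) / p0
    with hwdef
  have step1 : (r0 : EReal) ≤ fDerivInfE f := by
    have hev : ∀ᶠ x in nhdsWithin (0:ℝ) (Set.Ioi 0),
        ((w x : ℝ) : EReal) ≤ ((x * f (1 / x) : ℝ) : EReal) := by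
      filter_upwards [Ioo_mem_nhdsGT_of_mem (Set.left_mem_Ico.2 (div_pos hc hp0))] with x hx
      rw [EReal.coe_le_coe_iff]
      have ha : 0 < p0 * x := mul_pos hp0 hx.1
      have hbpos : 0 < c - p0 * x := by
        have := (lt_div_iff₀ hp0).1 hx.2
        nlinarith
      have hkey := keyR f hsmooth hf1 hf0 L hL (p0 * x) (c - p0 * x) p0 ha hbpos
        (le_of_lt hp0) (by linarith)
      have e0 : p0 * x + (c - p0 * x) = c := by ring
      rw [e0] at hkey
      have e1 : p0 / (p0 * x) = 1 / x := by
        rw [div_mul_eq_div_div_swap, div_right_comm, div_self (ne_of_gt hp0)]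
      rw [e1] at hkey
      rw [hwdef]
      rw [div_le_iff₀ hp0]
      have e2 : p0 * x * f (1 / x) = x * f (1 / x) * p0 := by ring
      linarith [hkey, e2 ▸ hkey]
    have hA : Tendsto (fun x : ℝ => (c - p0 * x) * f ((c - p0) / (c - p0 * x)))
        (nhdsWithin 0 (Set.Ioi 0)) (nhds (c * f ((c - p0) / c))) := by
      rcases eq_or_lt_of_le hp0c with he | hlt
      · subst he
        have hfun : (fun x : ℝ => (p0 - p0 * x) * f ((p0 - p0) / (p0 - p0 * x)))
            = fun x : ℝ => (p0 - p0 * x) * f 0 := by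
          funext x
          rw [sub_self, zero_div]
        rw [hfun]
        have : ContinuousAt (fun x : ℝ => (p0 - p0 * x) * f 0) 0 := by fun_prop
        have h2 := this.tendsto.mono_left (nhdsWithin_le_nhds (s := Set.Ioi (0:ℝ)))
        have e : (p0 - p0 * 0) * f 0 = p0 * f ((p0 - p0) / p0) := by
          rw [sub_self, zero_div]; ring
        rw [e] at h2
        exact h2
      · have hpos : (0:ℝ) < (c - p0) / c := div_pos (by linarith) hc
        have hinner : Tendsto (fun x : ℝ => (c - p0) / (c - p0 * x)) (nhds 0)
            (nhds ((c - p0) / c)) := by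
          have hd : ContinuousAt (fun x : ℝ => (c - p0) / (c - p0 * x)) 0 := by
            apply ContinuousAt.div continuousAt_const (by fun_prop)
            simpa using (ne_of_gt hc)
          have := hd.tendsto
          simpa using this
        have hfC : Tendsto f (nhds ((c - p0) / c)) (nhds (f ((c - p0) / c))) :=
          (hf' _ hpos).tendsto
        have hcomp := (hfC.comp hinner).mono_left (nhdsWithin_le_nhds (s := Set.Ioi (0:ℝ)))
        have hlin : Tendsto (fun x : ℝ => c - p0 * x) (nhdsWithin 0 (Set.Ioi 0)) (nhds c) := by
          have : ContinuousAt (fun x : ℝ => c - p0 * x) 0 := by fun_prop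
          have h2 := this.tendsto.mono_left (nhdsWithin_le_nhds (s := Set.Ioi (0:ℝ)))
          simpa using h2
        have := hlin.mul hcomp
        simpa [Function.comp] using this
    have htendR : Tendsto w (nhdsWithin 0 (Set.Ioi 0)) (nhds r0) := by
      have hpoly : Tendsto (fun x : ℝ => L / (2 * c) * (p0 - p0 * x) ^ 2)
          (nhdsWithin 0 (Set.Ioi 0)) (nhds (L / (2 * c) * p0 ^ 2)) := by
        have : ContinuousAt (fun x : ℝ => L / (2 * c) * (p0 - p0 * x) ^ 2) 0 := by fun_prop
        have h2 := this.tendsto.mono_left (nhdsWithin_le_nhds (s := Set.Ioi (0:ℝ)))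
        simpa using h2
      exact (hpoly.sub hA).div_const p0
    have htend : Tendsto (fun x => ((w x : ℝ) : EReal)) (nhdsWithin 0 (Set.Ioi 0))
        (nhds ((r0 : ℝ) : EReal)) := EReal.tendsto_coe.2 htendR
    have h1 : ((r0 : ℝ) : EReal) =
        liminf (fun x => ((w x : ℝ) : EReal)) (nhdsWithin 0 (Set.Ioi 0)) :=
      (htend.liminf_eq).symm
    calc ((r0 : ℝ) : EReal)
        = liminf (fun x => ((w x : ℝ) : EReal)) (nhdsWithin 0 (Set.Ioi 0)) := h1
      _ ≤ liminf (fun x : ℝ => ((x * f (1 / x) : ℝ) : EReal)) (nhdsWithin 0 (Set.Ioi 0)) :=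
          liminf_le_liminf hev
      _ ≤ limsup (fun x : ℝ => ((x * f (1 / x) : ℝ) : EReal)) (nhdsWithin 0 (Set.Ioi 0)) :=
          liminf_le_limsup
      _ = fDerivInfE f := rfl
  have h2 : ((p0 * r0 : ℝ) : EReal) ≤ (p0 : EReal) * fDerivInfE f := by
    rw [EReal.coe_mul]
    exact mul_le_mul_of_nonneg_left step1 (by exact_mod_cast hp0.le)
  have e : p0 * r0 = L / (2 * c) * p0 ^ 2 - c * f ((c - p0) / c) := by
    rw [hr0def]
    field_simp
  calc ((L / (2 * c) * p0 ^ 2 : ℝ) : EReal)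
      = ((p0 * r0 : ℝ) : EReal) + ((c * f ((c - p0) / c) : ℝ) : EReal) := by
        rw [← EReal.coe_add, e]
        norm_num
    _ ≤ (p0 : EReal) * fDerivInfE f + ((c * f ((c - p0) / c) : ℝ) : EReal) :=
        add_le_add_left h2 _

theorem fdiv_pinsker_binary (f : ℝ → ℝ)
    (hconv : ConvexOn ℝ (Set.Ioi 0) f)
    (hsmooth : ContDiffOn ℝ 2 f (Set.Ioi 0))
    (hf1 : f 1 = 0)
    (hf0 : Filter.Tendsto f (nhdsWithin 0 (Set.Ioi 0)) (nhds (f 0)))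
    (L : ℝ) (hL0 : 0 ≤ L)
    (hL : ∀ x y : ℝ, 0 < x → x < 1 → 0 < y → y < 1 →
      L ≤ (1 / y) * deriv (deriv f) (x / y)
          + (1 / (1 - y)) * deriv (deriv f) ((1 - x) / (1 - y)))
    (c : ℝ) (hc : 0 < c) (p q : Fin 2 → ℝ)
    (hp : ∀ i, 0 ≤ p i) (hq : ∀ i, 0 ≤ q i)
    (hpsum : ∑ i, p i = c) (hqsum : ∑ i, q i = c) :
    ((L / (2 * c) * ((1 / 2 : ℝ) * ∑ i, |p i - q i|) ^ 2 : ℝ) : EReal) ≤ fDivE f p q := by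
  have hp0 := hp 0
  have hp1 := hp 1
  have hq0 := hq 0
  have hq1 := hq 1
  have hps : p 0 + p 1 = c := by simpa [Fin.sum_univ_two] using hpsum
  have hqs : q 0 + q 1 = c := by simpa [Fin.sum_univ_two] using hqsum
  have habs : |p 1 - q 1| = |p 0 - q 0| := by
    rw [show p 1 - q 1 = -(p 0 - q 0) by linarith, abs_neg]
  have hgoal : (L / (2 * c) * ((1 / 2 : ℝ) * ∑ i, |p i - q i|) ^ 2 : ℝ)
      = L / (2 * c) * (p 0 - q 0) ^ 2 := by
    rw [Fin.sum_univ_two, habs, show ((1:ℝ)/2) * (|p 0 - q 0| + |p 0 - q 0|) = |p 0 - q 0| by ring,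
      sq_abs]
  rw [hgoal]
  unfold fDivE
  rw [Fin.sum_univ_two]
  rcases eq_or_lt_of_le hq0 with hq0e | hq0pos
  · -- q 0 = 0
    have hq1c : q 1 = c := by linarith
    have hq1ne : q 1 ≠ 0 := by rw [hq1c]; exact ne_of_gt hc
    rw [if_pos hq0e.symm, if_neg hq1ne]
    rcases eq_or_lt_of_le hp0 with hp0e | hp0pos
    · have hp1c : p 1 = c := by linarith
      rw [← hp0e, ← hq0e, hp1c, hq1c, div_self (ne_of_gt hc), hf1]
      norm_num
    · have hE := keyE f hsmooth hf1 hf0 L hL c (p 0) hc hp0pos (by linarith)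
      rw [hq1c, show p 1 = c - p 0 by linarith, ← hq0e]
      simpa using hE
  rcases eq_or_lt_of_le hq1 with hq1e | hq1pos
  · -- q 1 = 0
    have hq0c : q 0 = c := by linarith
    have hq0ne : q 0 ≠ 0 := by rw [hq0c]; exact ne_of_gt hc
    rw [if_neg hq0ne, if_pos hq1e.symm]
    rcases eq_or_lt_of_le hp1 with hp1e | hp1pos
    · have hp0c : p 0 = c := by linarith
      rw [← hp1e, hp0c, hq0c, div_self (ne_of_gt hc), hf1]
      norm_num
    · have hE := keyE f hsmooth hf1 hf0 L hL c (p 1) hc hp1pos (by linarith)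
      rw [hq0c, show p 0 = c - p 1 by linarith]
      rw [add_comm]
      have e : (c - p 1 - c) ^ 2 = p 1 ^ 2 := by ring
      rw [e]
      simpa using hE
  · rw [if_neg (ne_of_gt hq0pos), if_neg (ne_of_gt hq1pos), ← EReal.coe_add,
      EReal.coe_le_coe_iff]
    have hk := keyR f hsmooth hf1 hf0 L hL (q 0) (q 1) (p 0) hq0pos hq1pos hp0
      (by linarith)
    rw [hqs, show c - p 0 = p 1 by linarith] at hk
    exact hk
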